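/- Let A be a k-algebra that is a domain and let D be the k-subalgebra of A generated by all invertible elements of A. If A is left integral over D (for every f ∈ A there exist n ≥ 0 and d_0, …, d_n ∈ D, not all zero, with Σ_{s=0}^{n} d_s f^s = 0), then u_good(A) = A. In particular, for every division ring A that is a k-algebra, u_good(A) = A. (Corollary 1.4.) -/

import Mathlib

open scoped TensorProduct ENNReal

universe u v

variable (k : Type v) [Field k]

/-- An ℕ-filtration of a `k`-algebra `A`: an ascending chain of `k`-subspaces
`F 0 ⊆ F 1 ⊆ ⋯` with `k·1 ⊆ F 0`, `⋃ᵢ F i = A` and `F i * F j ⊆ F (i + j)`. -/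
structure AlgFiltration (A : Type u) [Ring A] [Algebra k A] where
  F : ℕ → Submodule k A
  one_mem : (1 : A) ∈ F 0
  mono : ∀ i, F i ≤ F (i + 1)
  exhaustive : ∀ a : A, ∃ i, a ∈ F i
  mul_mem : ∀ i j : ℕ, ∀ x ∈ F i, ∀ y ∈ F j, x * y ∈ F (i + j)

namespace AlgFiltration

variable {k} {A : Type u} [Ring A] [Algebra k A] (𝓕 : AlgFiltration k A)

/-- The Rees algebra `⊕ᵢ (F i) Xⁱ ⊆ A[X]` of a filtration. -/
def rees : Subalgebra k (Polynomial A) where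
  carrier := {p | ∀ i, p.coeff i ∈ 𝓕.F i}
  add_mem' := fun hp hq i => by
    simpa using (𝓕.F i).add_mem (hp i) (hq i)
  mul_mem' := fun {p q} hp hq i => by
    show (p * q).coeff i ∈ 𝓕.F i
    rw [Polynomial.coeff_mul]
    refine Submodule.sum_mem _ fun x hx => ?_
    have h := 𝓕.mul_mem x.1 x.2 _ (hp x.1) _ (hq x.2)
    rwa [Finset.HasAntidiagonal.mem_antidiagonal.mp hx] at h
  algebraMap_mem' := fun c i => by
    rcases i with _ | i
    · simpa [Polynomial.algebraMap_apply, Algebra.algebraMap_eq_smul_one] using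
        (𝓕.F 0).smul_mem c 𝓕.one_mem
    · simp [Polynomial.algebraMap_apply]

/-- The element `X` of the Rees algebra. -/
noncomputable def xElem : 𝓕.rees :=
  ⟨Polynomial.X, fun i => by
    rcases i with _ | _ | i
    · simp
    · simpa [Polynomial.coeff_X] using 𝓕.mono 0 𝓕.one_mem
    · simp [Polynomial.coeff_X]⟩

/-- The associated graded algebra `gr_F(A) = ⊕ᵢ F i / F (i-1)` of a filtration, realized as
the Rees algebra modulo the two-sided ideal generated by the central element `X`. -/
def gr : Type u := RingQuot (fun a b : 𝓕.rees => a = 𝓕.xElem ∧ b = 0)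

noncomputable instance : Ring 𝓕.gr :=
  inferInstanceAs (Ring (RingQuot (fun a b : 𝓕.rees => a = 𝓕.xElem ∧ b = 0)))

noncomputable instance : Algebra k 𝓕.gr :=
  inferInstanceAs (Algebra k (RingQuot (fun a b : 𝓕.rees => a = 𝓕.xElem ∧ b = 0)))

/-- The `k`-linear map sending `a ∈ F i` to the monomial `a Xⁱ` in the Rees algebra. -/
noncomputable def monoMap (i : ℕ) : 𝓕.F i →ₗ[k] 𝓕.rees where
  toFun a :=
    ⟨Polynomial.monomial i (a : A), fun j => by
      rcases eq_or_ne j i with rfl | h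
      · simp only [Polynomial.coeff_monomial, if_pos rfl]
        exact a.2
      · simp [Polynomial.coeff_monomial, h, Ne.symm h]⟩
  map_add' a b := by
    ext
    simp
  map_smul' c a := by
    ext
    simp

/-- The canonical projection from the Rees algebra onto the associated graded algebra. -/
noncomputable def grProj : 𝓕.rees →ₐ[k] 𝓕.gr :=
  RingQuot.mkAlgHom k (fun a b : 𝓕.rees => a = 𝓕.xElem ∧ b = 0)

/-- The degree-`i` homogeneous component `F i / F (i-1)` of the associated graded algebra,
realized as the image of `(F i) Xⁱ` under the projection. -/
noncomputable def grPiece (i : ℕ) : Submodule k 𝓕.gr :=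
  LinearMap.range (𝓕.grProj.toLinearMap ∘ₗ 𝓕.monoMap i)

end AlgFiltration

/-- A `k`-algebra `A` is a firm domain if `A ⊗[k] B` is a domain for every `k`-algebra `B`
which is a domain. -/
def IsFirmDomain (A : Type u) [Ring A] [Algebra k A] : Prop :=
  ∀ (B : Type u) [Ring B] [Algebra k B], IsDomain B → IsDomain (A ⊗[k] B)

/-- A filtration is good if its associated graded algebra is a domain.
`uGood k A` is the subspace of universally degree-`0` elements with respect to good
ℕ-filtrations: the intersection of `F 0` over all good ℕ-filtrations of `A`. -/
noncomputable def uGood (A : Type u) [Ring A] [Algebra k A] : Submodule k A :=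
  ⨅ (𝓕 : AlgFiltration k A) (_ : IsDomain 𝓕.gr), 𝓕.F 0

/-- A filtration is firm if its associated graded algebra is a firm domain.
`uFirm k A` is the intersection of `F 0` over all firm ℕ-filtrations of `A`. -/
noncomputable def uFirm (A : Type u) [Ring A] [Algebra k A] : Submodule k A :=
  ⨅ (𝓕 : AlgFiltration k A) (_ : IsFirmDomain k 𝓕.gr), 𝓕.F 0

/-- The Gelfand–Kirillov dimension of a `k`-algebra `A`: the supremum, over all
finite-dimensional subspaces `V ⊆ A` containing `1`, of `limsup_n log(dim Vⁿ)/log n`. -/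
noncomputable def GKdim (A : Type u) [Ring A] [Algebra k A] : ℝ≥0∞ :=
  ⨆ (V : Submodule k A) (_ : (1 : A) ∈ V) (_ : FiniteDimensional k V),
    Filter.limsup
      (fun n : ℕ => ENNReal.ofReal (Real.log (Module.finrank k ↥(V ^ n)) / Real.log n))
      Filter.atTop

/-- `R` is GKdim-additive if it has finite GK-dimension and
`GKdim (A ⊗ R) = GKdim A + GKdim R` for every `k`-algebra `A`. -/
def IsGKAdditive (R : Type u) [Ring R] [Algebra k R] : Prop :=
  GKdim k R < ⊤ ∧
    ∀ (A : Type u) [Ring A] [Algebra k A], GKdim k (A ⊗[k] R) = GKdim k A + GKdim k R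

/-- Membership in the family `𝓡₁` of GKdim-additive firm domains `R` with `u_firm(R) = k·1`. -/
def InR1 (R : Type u) [Ring R] [Algebra k R] : Prop :=
  IsGKAdditive k R ∧ IsFirmDomain k R ∧ uFirm k R = 1

/-- Membership in the family `𝓡₂` of GKdim-additive domains `R` with `u_good(R) = k·1`. -/
def InR2 (R : Type u) [Ring R] [Algebra k R] : Prop :=
  IsGKAdditive k R ∧ IsDomain R ∧ uGood k R = 1

/-- The canonical image of `P ⊗ Q` in `M ⊗[k] N`, for subspaces `P ⊆ M` and `Q ⊆ N`. -/
def tensorSub {M N : Type u} [Ring M] [Ring N] [Algebra k M] [Algebra k N]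
    (P : Submodule k M) (Q : Submodule k N) : Submodule k (M ⊗[k] N) :=
  Submodule.span k {z | ∃ x ∈ P, ∃ y ∈ Q, z = x ⊗ₜ[k] y}


section Cor14Aux

namespace AlgFiltration

variable {k : Type v} [Field k] {A : Type u} [Ring A] [Algebra k A] (𝓕 : AlgFiltration k A)

theorem F_mono : Monotone 𝓕.F := monotone_nat_of_le_succ 𝓕.mono

/-- `Fm1 i = F (i-1)`, with `Fm1 0 = ⊥`. -/
def Fm1 : ℕ → Submodule k A
  | 0 => ⊥
  | (i + 1) => 𝓕.F i

theorem memK_mul_right {p q : Polynomial A} (hp : ∀ i, p.coeff i ∈ 𝓕.Fm1 i)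
    (hq : ∀ i, q.coeff i ∈ 𝓕.F i) (i : ℕ) : (p * q).coeff i ∈ 𝓕.Fm1 i := by
  rw [Polynomial.coeff_mul]
  refine Submodule.sum_mem _ fun x hx => ?_
  rw [← Finset.HasAntidiagonal.mem_antidiagonal.mp hx]
  rcases x with ⟨a, b⟩
  rcases a with _ | a
  · have h0 : p.coeff 0 = 0 := by simpa [Fm1] using hp 0
    simp [h0]
  · have h := 𝓕.mul_mem a b _ (hp (a + 1)) _ (hq b)
    show p.coeff (a + 1) * q.coeff b ∈ 𝓕.Fm1 (a + 1 + b)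
    have he : a + 1 + b = (a + b) + 1 := by omega
    rw [he]
    exact h

theorem memK_mul_left {p q : Polynomial A} (hp : ∀ i, p.coeff i ∈ 𝓕.F i)
    (hq : ∀ i, q.coeff i ∈ 𝓕.Fm1 i) (i : ℕ) : (p * q).coeff i ∈ 𝓕.Fm1 i := by
  rw [Polynomial.coeff_mul]
  refine Submodule.sum_mem _ fun x hx => ?_
  rw [← Finset.HasAntidiagonal.mem_antidiagonal.mp hx]
  rcases x with ⟨a, b⟩
  rcases b with _ | b
  · have h0 : q.coeff 0 = 0 := by simpa [Fm1] using hq 0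
    simp [h0]
  · have h := 𝓕.mul_mem a b _ (hp a) _ (hq (b + 1))
    show p.coeff a * q.coeff (b + 1) ∈ 𝓕.Fm1 (a + (b + 1))
    have he : a + (b + 1) = (a + b) + 1 := by omega
    rw [he]
    exact h

/-- The congruence relation on the Rees algebra identifying elements modulo `X · rees`. -/
def Kcon : RingCon 𝓕.rees where
  r p q := ∀ i, ((p : Polynomial A) - (q : Polynomial A)).coeff i ∈ 𝓕.Fm1 i
  iseqv := by
    refine ⟨fun p i => by simp, fun {p q} h i => ?_, fun {p q s} h h' i => ?_⟩
    · have he : ((q : Polynomial A) - (p : Polynomial A))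
          = -((p : Polynomial A) - (q : Polynomial A)) := (neg_sub _ _).symm
      rw [he, Polynomial.coeff_neg]
      exact (𝓕.Fm1 i).neg_mem (h i)
    · have he : ((p : Polynomial A) - (s : Polynomial A))
          = ((p : Polynomial A) - q) + ((q : Polynomial A) - s) := by abel
      rw [he, Polynomial.coeff_add]
      exact (𝓕.Fm1 i).add_mem (h i) (h' i)
  add' := by
    intro a b c d h h' i
    have he : ((↑(a + c) : Polynomial A) - ↑(b + d))
        = ((a : Polynomial A) - b) + ((c : Polynomial A) - d) := by
      push_cast
      abel
    rw [he, Polynomial.coeff_add]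
    exact (𝓕.Fm1 i).add_mem (h i) (h' i)
  mul' := by
    intro a b c d h h' i
    have key : (↑(a * c) : Polynomial A) - ↑(b * d)
        = ((a : Polynomial A) - b) * c + (b : Polynomial A) * ((c : Polynomial A) - d) := by
      push_cast
      rw [sub_mul, mul_sub]
      abel
    rw [key, Polynomial.coeff_add]
    exact (𝓕.Fm1 i).add_mem (𝓕.memK_mul_right h c.2 i) (𝓕.memK_mul_left b.2 h' i)

theorem Kcon_iff (p q : 𝓕.rees) :
    𝓕.Kcon p q ↔ ∀ i, ((p : Polynomial A) - (q : Polynomial A)).coeff i ∈ 𝓕.Fm1 i :=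
  Iff.rfl

theorem Kcon_xElem : 𝓕.Kcon 𝓕.xElem 0 := by
  rw [Kcon_iff]
  intro i
  rcases i with _ | _ | i
  · simp [xElem, Fm1]
  · have he : ((𝓕.xElem : Polynomial A) - ((0 : 𝓕.rees) : Polynomial A)).coeff 1 = 1 := by
      simp [xElem]
    rw [he]
    exact 𝓕.one_mem
  · have he : ((𝓕.xElem : Polynomial A) - ((0 : 𝓕.rees) : Polynomial A)).coeff (i + 2) = 0 := by
      simp [xElem, Polynomial.coeff_X]
    rw [he]
    exact (𝓕.Fm1 (i + 2)).zero_mem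

/-- The comparison map from `gr` to the quotient of the Rees algebra by `Kcon`. -/
noncomputable def toQuot : 𝓕.gr →+* 𝓕.Kcon.Quotient :=
  RingQuot.lift ⟨𝓕.Kcon.mk', by
    rintro x y ⟨rfl, rfl⟩
    exact (RingCon.eq _).mpr 𝓕.Kcon_xElem⟩

theorem toQuot_grProj (p : 𝓕.rees) : 𝓕.toQuot (𝓕.grProj p) = 𝓕.Kcon.mk' p := by
  have h1 : 𝓕.grProj p = RingQuot.mkRingHom (fun a b : 𝓕.rees => a = 𝓕.xElem ∧ b = 0) p :=
    RingHom.congr_fun (RingQuot.mkAlgHom_coe k _) p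
  rw [h1]
  exact RingQuot.lift_mkRingHom_apply _ _ p

theorem grProj_xElem : 𝓕.grProj 𝓕.xElem = 0 := by
  have h : 𝓕.grProj 𝓕.xElem = 𝓕.grProj 0 :=
    RingQuot.mkAlgHom_rel k (s := fun a b : 𝓕.rees => a = 𝓕.xElem ∧ b = 0) ⟨rfl, rfl⟩
  rw [h, map_zero]

/-- The principal symbol in degree `i` of an element `a ∈ F i`. -/
noncomputable def symb (i : ℕ) (a : A) (ha : a ∈ 𝓕.F i) : 𝓕.gr :=
  𝓕.grProj (𝓕.monoMap i ⟨a, ha⟩)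

theorem symb_congr {i j : ℕ} {a b : A} (hij : i = j) (hab : a = b)
    (ha : a ∈ 𝓕.F i) (hb : b ∈ 𝓕.F j) : 𝓕.symb i a ha = 𝓕.symb j b hb := by
  subst hij; subst hab; rfl

theorem symb_mul (i j : ℕ) (a b : A) (ha : a ∈ 𝓕.F i) (hb : b ∈ 𝓕.F j) :
    𝓕.symb i a ha * 𝓕.symb j b hb
      = 𝓕.symb (i + j) (a * b) (𝓕.mul_mem i j a ha b hb) := by
  rw [symb, symb, symb, ← map_mul]
  congr 1
  apply Subtype.ext
  show (Polynomial.monomial i a : Polynomial A) * Polynomial.monomial j b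
      = Polynomial.monomial (i + j) (a * b)
  exact Polynomial.monomial_mul_monomial i j a b

theorem symb_one (h : (1 : A) ∈ 𝓕.F 0) : 𝓕.symb 0 1 h = 1 := by
  rw [symb]
  have he : (𝓕.monoMap 0 ⟨1, h⟩ : 𝓕.rees) = 1 := by
    apply Subtype.ext
    show (Polynomial.monomial 0 (1 : A) : Polynomial A) = 1
    exact Polynomial.monomial_zero_one
  rw [he, map_one]

theorem pow_memF {a : A} {i : ℕ} (ha : a ∈ 𝓕.F i) (m : ℕ) : a ^ m ∈ 𝓕.F (i * m) := by
  induction m with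
  | zero =>
    rw [pow_zero, Nat.mul_zero]
    exact 𝓕.one_mem
  | succ m ih =>
    rw [pow_succ, Nat.mul_succ]
    exact 𝓕.mul_mem (i * m) i _ ih _ ha

theorem symb_pow (i : ℕ) (a : A) (ha : a ∈ 𝓕.F i) (m : ℕ) :
    (𝓕.symb i a ha) ^ m = 𝓕.symb (i * m) (a ^ m) (𝓕.pow_memF ha m) := by
  induction m with
  | zero =>
    rw [pow_zero,
      𝓕.symb_congr (Nat.mul_zero i) (pow_zero a) (𝓕.pow_memF ha 0) 𝓕.one_mem]
    exact (𝓕.symb_one _).symm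
  | succ m ih =>
    rw [pow_succ, ih, symb_mul]
    exact 𝓕.symb_congr (Nat.mul_succ i m).symm (pow_succ a m).symm _ _

theorem symb_eq_zero_of (i : ℕ) (a : A) (ha : a ∈ 𝓕.F i) (h : a ∈ 𝓕.Fm1 i) :
    𝓕.symb i a ha = 0 := by
  rcases i with _ | i
  · have h0 : a = 0 := by simpa [Fm1] using h
    subst h0
    have he : (⟨0, ha⟩ : 𝓕.F 0) = 0 := rfl
    rw [symb, he, map_zero, map_zero]
  · have h' : a ∈ 𝓕.F i := h
    have key : (𝓕.monoMap (i + 1) ⟨a, ha⟩ : 𝓕.rees) = 𝓕.xElem * 𝓕.monoMap i ⟨a, h'⟩ := by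
      apply Subtype.ext
      show (Polynomial.monomial (i + 1) a : Polynomial A)
          = Polynomial.X * Polynomial.monomial i a
      rw [Polynomial.X_mul_monomial]
    rw [symb, key, map_mul, 𝓕.grProj_xElem, zero_mul]

theorem symb_eq_zero_iff (i : ℕ) (a : A) (ha : a ∈ 𝓕.F i) :
    𝓕.symb i a ha = 0 ↔ a ∈ 𝓕.Fm1 i := by
  refine ⟨fun h => ?_, 𝓕.symb_eq_zero_of i a ha⟩
  have h' : 𝓕.grProj (𝓕.monoMap i ⟨a, ha⟩) = 0 := h
  have h2 : 𝓕.toQuot (𝓕.grProj (𝓕.monoMap i ⟨a, ha⟩)) = 𝓕.toQuot (𝓕.grProj 0) := by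
    simp only [h', map_zero]
  rw [𝓕.toQuot_grProj, 𝓕.toQuot_grProj] at h2
  have h3 : 𝓕.Kcon (𝓕.monoMap i ⟨a, ha⟩) 0 := (RingCon.eq _).mp h2
  have h4 := (𝓕.Kcon_iff _ _).mp h3 i
  simpa [monoMap, Polynomial.coeff_monomial] using h4

theorem mem_F0_of_isUnit [IsDomain A] (hgr : IsDomain 𝓕.gr) {u : A} (hu : IsUnit u) :
    u ∈ 𝓕.F 0 := by
  classical
  haveI := hgr
  by_contra hu0
  obtain ⟨w, hw⟩ := hu
  set v : A := ↑w⁻¹ with hv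
  have huv : u * v = 1 := by rw [← hw, hv]; exact w.mul_inv
  have hexu := 𝓕.exhaustive u
  have hexv := 𝓕.exhaustive v
  obtain ⟨i, hiu, himin⟩ : ∃ i, u ∈ 𝓕.F i ∧ ∀ i' < i, u ∉ 𝓕.F i' :=
    ⟨Nat.find hexu, Nat.find_spec hexu, fun i' h => Nat.find_min hexu h⟩
  obtain ⟨j, hjv, hjmin⟩ : ∃ j, v ∈ 𝓕.F j ∧ ∀ j' < j, v ∉ 𝓕.F j' :=
    ⟨Nat.find hexv, Nat.find_spec hexv, fun j' h => Nat.find_min hexv h⟩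
  have hipos : 1 ≤ i := by
    by_contra hc
    push_neg at hc
    have h0 : i = 0 := by omega
    exact hu0 (h0 ▸ hiu)
  have hsu : 𝓕.symb i u hiu ≠ 0 := fun h0 => by
    have hmem := (𝓕.symb_eq_zero_iff _ _ _).mp h0
    obtain ⟨i', hi'⟩ : ∃ i', i = i' + 1 := ⟨i - 1, by omega⟩
    rw [hi'] at hmem
    exact himin i' (by omega) hmem
  have hsv : 𝓕.symb j v hjv ≠ 0 := fun h0 => by
    have hmem := (𝓕.symb_eq_zero_iff _ _ _).mp h0
    rcases j with _ | j'
    · have hv0 : v = 0 := by simpa [Fm1] using hmem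
      rw [hv0, mul_zero] at huv
      exact one_ne_zero huv.symm
    · exact hjmin j' (by omega) hmem
  have hprod : 𝓕.symb i u hiu * 𝓕.symb j v hjv = 0 := by
    rw [𝓕.symb_mul]
    apply 𝓕.symb_eq_zero_of
    obtain ⟨t, ht⟩ : ∃ t, i + j = t + 1 := ⟨i + j - 1, by omega⟩
    rw [ht]
    show u * v ∈ 𝓕.F t
    rw [huv]
    exact 𝓕.F_mono (Nat.zero_le t) 𝓕.one_mem
  exact mul_ne_zero hsu hsv hprod

end AlgFiltration

/-- Main lemma: under the integrality hypothesis, every good filtration has `F 0 = ⊤`. -/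
theorem good_F0_top {k : Type v} [Field k] {A : Type u} [Ring A] [Algebra k A] [IsDomain A]
    (hint : ∀ f : A, ∃ (n : ℕ) (d : Fin (n + 1) → A),
        (∀ s, d s ∈ Algebra.adjoin k {x : A | IsUnit x}) ∧ (∃ s, d s ≠ 0) ∧
          ∑ s, d s * f ^ (s : ℕ) = 0)
    (𝓕 : AlgFiltration k A) (hgr : IsDomain 𝓕.gr) (a : A) : a ∈ 𝓕.F 0 := by
  classical
  haveI := hgr
  have hD : ∀ x ∈ Algebra.adjoin k {x : A | IsUnit x}, x ∈ 𝓕.F 0 := by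
    intro x hx
    induction hx using Algebra.adjoin_induction with
    | mem x hx => exact 𝓕.mem_F0_of_isUnit hgr hx
    | algebraMap c =>
      simpa [Algebra.algebraMap_eq_smul_one] using (𝓕.F 0).smul_mem c 𝓕.one_mem
    | add x y _ _ hx hy => exact (𝓕.F 0).add_mem hx hy
    | mul x y _ _ hx hy => simpa using 𝓕.mul_mem 0 0 x hx y hy
  by_contra ha0
  have hexa := 𝓕.exhaustive a
  obtain ⟨i, hia, himin⟩ : ∃ i, a ∈ 𝓕.F i ∧ ∀ i' < i, a ∉ 𝓕.F i' :=
    ⟨Nat.find hexa, Nat.find_spec hexa, fun i' h => Nat.find_min hexa h⟩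
  have hipos : 1 ≤ i := by
    by_contra hc
    push_neg at hc
    have h0 : i = 0 := by omega
    exact ha0 (h0 ▸ hia)
  have hsa : 𝓕.symb i a hia ≠ 0 := fun h0 => by
    have hmem := (𝓕.symb_eq_zero_iff _ _ _).mp h0
    obtain ⟨i', hi'⟩ : ∃ i', i = i' + 1 := ⟨i - 1, by omega⟩
    rw [hi'] at hmem
    exact himin i' (by omega) hmem
  obtain ⟨n, d, hdD, ⟨s0, hs0⟩, hsum⟩ := hint a
  have hdF0 : ∀ s, d s ∈ 𝓕.F 0 := fun s => hD _ (hdD s)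
  have hTne : (Finset.univ.filter (fun s : Fin (n + 1) => d s ≠ 0)).Nonempty :=
    ⟨s0, by simp [hs0]⟩
  obtain ⟨m, hdm, hmax⟩ : ∃ m : Fin (n + 1), d m ≠ 0 ∧ ∀ s, d s ≠ 0 → s ≤ m := by
    refine ⟨(Finset.univ.filter (fun s : Fin (n + 1) => d s ≠ 0)).max' hTne, ?_, ?_⟩
    · have h := (Finset.univ.filter (fun s : Fin (n + 1) => d s ≠ 0)).max'_mem hTne
      simpa using h
    · intro s hs
      exact Finset.le_max' _ s (by simp [hs])
  have htop : ∀ s : Fin (n + 1), m < s → d s = 0 := by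
    intro s hs
    by_contra hds
    exact absurd (hmax s hds) (not_le.mpr hs)
  have hMpos : 1 ≤ (m : ℕ) := by
    by_contra hc
    push_neg at hc
    have hM0 : (m : ℕ) = 0 := by omega
    have hcollapse : ∑ s, d s * a ^ (s : ℕ) = d m * a ^ (m : ℕ) := by
      refine Finset.sum_eq_single m (fun s _ hs => ?_) (fun h => absurd (Finset.mem_univ m) h)
      have hlt : m < s := by
        rw [Fin.lt_def, hM0]
        have : (s : ℕ) ≠ (m : ℕ) := fun h => hs (Fin.ext (h.trans hM0 ▸ h))
        omega
      rw [htop s hlt, zero_mul]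
    rw [hcollapse, hM0, pow_zero, mul_one] at hsum
    exact hdm hsum
  have hIM : 1 ≤ i * (m : ℕ) := Nat.mul_pos hipos hMpos
  obtain ⟨t, ht⟩ : ∃ t, i * (m : ℕ) = t + 1 := ⟨i * (m : ℕ) - 1, by omega⟩
  have hsumterm : ∀ s ∈ Finset.univ.erase m, d s * a ^ (s : ℕ) ∈ 𝓕.F t := by
    intro s hs
    have hsm : s ≠ m := (Finset.mem_erase.mp hs).1
    rcases lt_or_gt_of_ne hsm with hlt | hgt
    · have h1 : (s : ℕ) < (m : ℕ) := hlt
      have h2 : i * ((s : ℕ) + 1) ≤ i * (m : ℕ) := Nat.mul_le_mul_left i (by omega)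
      have h3 : i * (s : ℕ) + i ≤ i * (m : ℕ) := by rw [← Nat.mul_succ]; exact h2
      have hmem : d s * a ^ (s : ℕ) ∈ 𝓕.F (0 + i * (s : ℕ)) :=
        𝓕.mul_mem 0 _ _ (hdF0 s) _ (𝓕.pow_memF hia (s : ℕ))
      exact 𝓕.F_mono (by omega) hmem
    · rw [htop s hgt, zero_mul]
      exact (𝓕.F t).zero_mem
  have hneg : d m * a ^ (m : ℕ) = -∑ s ∈ Finset.univ.erase m, d s * a ^ (s : ℕ) := by
    have h := Finset.add_sum_erase Finset.univ (fun s => d s * a ^ (s : ℕ))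
      (Finset.mem_univ m)
    rw [hsum] at h
    exact eq_neg_of_add_eq_zero_left h
  have hmemK : d m * a ^ (m : ℕ) ∈ 𝓕.Fm1 (i * (m : ℕ)) := by
    rw [ht]
    show d m * a ^ (m : ℕ) ∈ 𝓕.F t
    rw [hneg]
    exact (𝓕.F t).neg_mem (Submodule.sum_mem _ hsumterm)
  have hs0' : 𝓕.symb 0 (d m) (hdF0 m) ≠ 0 := fun h0 =>
    hdm (by simpa [AlgFiltration.Fm1] using (𝓕.symb_eq_zero_iff _ _ _).mp h0)
  have hcontr : 𝓕.symb 0 (d m) (hdF0 m) * (𝓕.symb i a hia) ^ (m : ℕ) = 0 := by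
    rw [𝓕.symb_pow, 𝓕.symb_mul]
    exact 𝓕.symb_eq_zero_of _ _ _ (by rw [Nat.zero_add]; exact hmemK)
  exact mul_ne_zero hs0' (pow_ne_zero _ hsa) hcontr

end Cor14Aux

/-- Corollary 1.4: if a domain `A` is left integral over the subalgebra generated by its
invertible elements then `u_good(A) = A`; in particular `u_good(A) = A` for every division
ring `A` which is a `k`-algebra. -/
theorem statement16 {k : Type v} [Field k] :
    (∀ (A : Type u) [Ring A] [Algebra k A], IsDomain A →
      (∀ f : A, ∃ (n : ℕ) (d : Fin (n + 1) → A),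
        (∀ s, d s ∈ Algebra.adjoin k {x : A | IsUnit x}) ∧ (∃ s, d s ≠ 0) ∧
          ∑ s, d s * f ^ (s : ℕ) = 0) →
      uGood k A = ⊤) ∧
    (∀ (A : Type u) [DivisionRing A] [Algebra k A], uGood k A = ⊤) := by
  classical
  have main : ∀ (A : Type u) [Ring A] [Algebra k A], IsDomain A →
      (∀ f : A, ∃ (n : ℕ) (d : Fin (n + 1) → A),
        (∀ s, d s ∈ Algebra.adjoin k {x : A | IsUnit x}) ∧ (∃ s, d s ≠ 0) ∧
          ∑ s, d s * f ^ (s : ℕ) = 0) →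
      uGood k A = ⊤ := by
    intro A _ _ hdom hint
    haveI := hdom
    rw [uGood, Submodule.eq_top_iff']
    intro x
    rw [Submodule.mem_iInf]
    intro 𝓕
    rw [Submodule.mem_iInf]
    intro hgr
    exact good_F0_top hint 𝓕 hgr x
  refine ⟨main, fun A _ _ => ?_⟩
  refine main A inferInstance (fun f => ⟨1, ![-f, 1], fun s => ?_, ⟨1, by simp⟩, ?_⟩)
  · fin_cases s
    · show -f ∈ _
      by_cases hf : f = 0
      · rw [hf, neg_zero]
        exact zero_mem _
      · exact neg_mem (Algebra.subset_adjoin (IsUnit.mk0 f hf))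
    · exact one_mem _
  · simp [Fin.sum_univ_two]
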